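/- For ν ≥ 0, the series ∑_{n≥1} (2ν+3)_{n-1}/(n!(ν+n+1)) diverges; consequently the invariant measure π_n = (Π_n e₂)* of the ℓ=1 quasi-birth-and-death process has infinite total mass. -/

import Mathlib

open Real

/-- Pochhammer (rising factorial) symbol `(a)_n = a(a+1)⋯(a+n-1)`. -/
noncomputable def poch (a : ℝ) (n : ℕ) : ℝ := ∏ i ∈ Finset.range n, (a + i)

/-- The matrix-valued potential coefficients `Π_n` of the ℓ=1 QBD process
(diagonal, given by their two diagonal entries `i = 0, 1`). -/
noncomputable def Pot (ν : ℝ) (n : ℕ) (i : Fin 2) : ℝ :=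
  if n = 0 then
    Real.Gamma (ν + 1) / (Real.sqrt π * (ν + 2) * Real.Gamma (ν + 1 / 2)) *
      (if i = 0 then 1 else (ν + 1) / (ν + 2))
  else
    2 * Real.Gamma (ν + 2) * poch (2 * ν + 3) (n - 1) /
        (Real.sqrt π * (Nat.factorial n) * (ν + 2) * Real.Gamma (ν + 1 / 2)) *
      (if i = 0 then (ν + 1) / (ν + n + 1) else ν * (ν + n + 1) / ((ν + n) * (ν + n + 2)))

lemma poch_pos {a : ℝ} (ha : 0 < a) (n : ℕ) : 0 < poch a n :=
  Finset.prod_pos fun i _ => by positivity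

lemma poch_mono {a b : ℝ} (ha : 0 < a) (h : a ≤ b) (n : ℕ) : poch a n ≤ poch b n :=
  Finset.prod_le_prod (fun i _ => by positivity) (fun i _ => by linarith)

lemma poch_three (n : ℕ) : poch 3 n = (Nat.factorial (n + 2)) / 2 := by
  induction n with
  | zero => simp [poch, Nat.factorial]
  | succ m ih =>
    have hf : Nat.factorial (m + 1 + 2) = (m + 3) * Nat.factorial (m + 2) := by
      rw [show m + 1 + 2 = (m + 2) + 1 from rfl, Nat.factorial_succ]
    rw [poch, Finset.prod_range_succ, ← poch, ih, hf]
    push_cast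
    ring

lemma key_ineq (ν : ℝ) (hν : 0 ≤ ν) (n : ℕ) :
    (Nat.factorial (n + 1) : ℝ) * (ν + n + 2) ≤ 2 * poch (2 * ν + 3) n * (ν + 1) := by
  have hP : ((Nat.factorial (n + 2) : ℝ)) / 2 ≤ poch (2 * ν + 3) n := by
    rw [← poch_three]
    exact poch_mono (by norm_num) (by linarith) n
  have hfac : (Nat.factorial (n + 2) : ℝ) = (n + 2) * Nat.factorial (n + 1) := by
    rw [show n + 2 = (n + 1) + 1 from rfl, Nat.factorial_succ]
    push_cast; ring
  have hF : (0 : ℝ) < Nat.factorial (n + 1) := by positivity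
  rw [hfac] at hP
  nlinarith [mul_nonneg (mul_nonneg hF.le hν) (by positivity : (0:ℝ) ≤ (n:ℝ) + 1)]

lemma not_summable_of_eventually_le {f : ℕ → ℝ} {c : ℝ} (hc : 0 < c)
    (h : ∀ᶠ n in Filter.atTop, c ≤ f n) : ¬ Summable f := by
  intro hs
  have h0 := hs.tendsto_atTop_zero
  have h1 := h0.eventually (gt_mem_nhds hc)
  obtain ⟨n, h2, h3⟩ := (h.and h1).exists
  linarith

/-- for `ν ≥ 0` the series `∑_{n≥1} (2ν+3)_{n-1}/(n!(ν+n+1))` diverges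
(here written with index shifted by one), and consequently the invariant measure
`π_n = (Π_n e₂)*` of the ℓ=1 quasi-birth-and-death process has infinite total mass. -/
theorem qbd_invariant_measure_infinite (ν : ℝ) (hν : 0 ≤ ν) :
    ¬ Summable (fun n : ℕ =>
        poch (2 * ν + 3) n / ((Nat.factorial (n + 1)) * (ν + n + 2))) ∧
    ¬ Summable (fun n : ℕ => Pot ν n 0 + Pot ν n 1) := by
  have hν1 : (0:ℝ) < ν + 1 := by linarith
  constructor
  · apply not_summable_of_eventually_le (c := 1 / (2 * (ν + 1))) (by positivity)
    filter_upwards with n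
    have hF : (0 : ℝ) < Nat.factorial (n + 1) := by positivity
    have hd : (0 : ℝ) < (Nat.factorial (n + 1) : ℝ) * (ν + n + 2) := by positivity
    rw [div_le_div_iff₀ (by positivity) hd]
    have := key_ineq ν hν n
    nlinarith [this]
  · have hA : (0:ℝ) < Real.Gamma (ν + 2) := Real.Gamma_pos_of_pos (by linarith)
    have hG : (0:ℝ) < Real.Gamma (ν + 1 / 2) := Real.Gamma_pos_of_pos (by linarith)
    have hs : (0:ℝ) < Real.sqrt π := Real.sqrt_pos.mpr Real.pi_pos
    set c : ℝ := Real.Gamma (ν + 2) / (Real.sqrt π * (ν + 2) * Real.Gamma (ν + 1 / 2)) with hc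
    have hcpos : 0 < c := by positivity
    apply not_summable_of_eventually_le (c := c) hcpos
    filter_upwards [Filter.eventually_ge_atTop 1] with n hn
    obtain ⟨m, rfl⟩ := Nat.exists_eq_add_of_le hn
    have hF : (0 : ℝ) < Nat.factorial (1 + m) := by positivity
    have hP : (0:ℝ) < poch (2 * ν + 3) m := poch_pos (by linarith) m
    have h0 : Pot ν (1 + m) 0 = 2 * Real.Gamma (ν + 2) * poch (2 * ν + 3) m /
        (Real.sqrt π * (Nat.factorial (1 + m)) * (ν + 2) * Real.Gamma (ν + 1 / 2)) *
        ((ν + 1) / (ν + (1 + m : ℕ) + 1)) := by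
      simp [Pot]
    have h1 : 0 ≤ Pot ν (1 + m) 1 := by
      have : Pot ν (1 + m) 1 = 2 * Real.Gamma (ν + 2) * poch (2 * ν + 3) m /
          (Real.sqrt π * (Nat.factorial (1 + m)) * (ν + 2) * Real.Gamma (ν + 1 / 2)) *
          (ν * (ν + (1 + m : ℕ) + 1) / ((ν + (1 + m : ℕ)) * (ν + (1 + m : ℕ) + 2))) := by
        simp [Pot]
      rw [this]
      have : (0:ℝ) ≤ (1 + m : ℕ) := by positivity
      positivity
    have hkey := key_ineq ν hν m
    have hmc : ((1 + m : ℕ) : ℝ) = (m : ℝ) + 1 := by push_cast; ring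
    have hfe : (Nat.factorial (1 + m) : ℝ) = (Nat.factorial (m + 1) : ℝ) := by
      rw [Nat.add_comm]
    have h2 : c ≤ Pot ν (1 + m) 0 := by
      rw [h0, hc, hmc, hfe]
      rw [div_mul_div_comm, div_le_div_iff₀ (by positivity) (by positivity)]
      nlinarith [mul_le_mul_of_nonneg_left hkey
        (by positivity : (0:ℝ) ≤ Real.Gamma (ν + 2) * (Real.sqrt π * (ν + 2) * Real.Gamma (ν + 1 / 2)))]
    linarith
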